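/- Let (Ω, μ) be a measure space, ν₁ > 0, and let K : ℝ → ℝ^d satisfy |K(s) − K(s')| ≤ ν₁ |s − s'| for all s, s' ∈ ℝ. Let v, w : Ω → ℝ be measurable and let G : Ω → ℝ^d be μ-integrable. Then lim_{k→0⁺} (1/k) ∫_{{x : |v(x) − w(x)| ≤ k}} (K(v(x)) − K(w(x)))·G(x) dμ = 0. -/

import Mathlib

open MeasureTheory Filter

/-- If `K : ℝ → ℝ^d` is Lipschitz with constant `ν₁`, `v, w` are measurable and
`G ∈ L¹(Ω; ℝ^d)`, then
`(1/k) ∫_{{|v−w| ≤ k}} (K(v) − K(w))·G dμ → 0` as `k → 0⁺`. -/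
theorem stmt_11 {Ω : Type*} [MeasurableSpace Ω] (μ : Measure Ω) {d : ℕ}
    (ν₁ : ℝ) (hν₁ : 0 < ν₁) (K : ℝ → EuclideanSpace ℝ (Fin d))
    (hK : ∀ s s' : ℝ, ‖K s - K s'‖ ≤ ν₁ * |s - s'|)
    (v w : Ω → ℝ) (hv : Measurable v) (hw : Measurable w)
    (G : Ω → EuclideanSpace ℝ (Fin d)) (hG : Integrable G μ) :
    Tendsto (fun k : ℝ =>
        (1 / k) * ∫ x in {x : Ω | |v x - w x| ≤ k}, (inner ℝ (K (v x) - K (w x)) (G x) : ℝ) ∂μ)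
      (nhdsWithin 0 (Set.Ioi 0)) (nhds 0) := by
  -- measurability
  have hvw : Measurable fun x => |v x - w x| := (hv.sub hw).abs
  set B : ℝ → Set Ω := fun k => {x | |v x - w x| ≤ k} ∩ {x | v x ≠ w x} with hB
  have hBm : ∀ k, MeasurableSet (B k) := fun k =>
    (hvw measurableSet_Iic).inter ((measurableSet_eq_fun hv hw).compl)
  have hBmono : ∀ ⦃k k' : ℝ⦄, k ≤ k' → B k ⊆ B k' := fun k k' h x hx =>
    ⟨le_trans hx.1 h, hx.2⟩
  set h : ℝ → ℝ := fun k => ∫ x in B k, ‖G x‖ ∂μ with hh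
  have hGnorm : Integrable (fun x => ‖G x‖) μ := hG.norm
  have hnonneg : ∀ k, 0 ≤ h k := fun k =>
    setIntegral_nonneg (hBm k) fun x _ => norm_nonneg _
  have hhm : ∀ ⦃k k'⦄, k ≤ k' → h k ≤ h k' := fun k k' hk =>
    setIntegral_mono_set (hGnorm.integrableOn) (Filter.Eventually.of_forall fun x => norm_nonneg _)
      (HasSubset.Subset.eventuallyLE (hBmono hk))
  -- the main bound
  have key : ∀ k : ℝ, 0 < k →
      |(1 / k) * ∫ x in {x : Ω | |v x - w x| ≤ k}, (inner ℝ (K (v x) - K (w x)) (G x) : ℝ) ∂μ|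
        ≤ ν₁ * h k := by
    intro k hk
    have hKc : Continuous K := by
      have : LipschitzWith (Real.toNNReal ν₁) K := by
        apply LipschitzWith.of_dist_le_mul
        intro s s'
        rw [dist_eq_norm, Real.dist_eq, Real.coe_toNNReal _ hν₁.le]
        exact hK s s'
      exact this.continuous
    have hint_meas : AEStronglyMeasurable
        (fun x => (inner ℝ (K (v x) - K (w x)) (G x) : ℝ)) μ := by
      apply AEStronglyMeasurable.inner
      · exact ((hKc.measurable.comp hv).sub (hKc.measurable.comp hw)).aestronglyMeasurable
      · exact hG.1
    -- integrand vanishes off {v ≠ w}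
    have hvanish : ∀ x, v x = w x → (inner ℝ (K (v x) - K (w x)) (G x) : ℝ) = 0 := by
      intro x hx; rw [hx]; simp
    have hstep : ∫ x in {x : Ω | |v x - w x| ≤ k}, (inner ℝ (K (v x) - K (w x)) (G x) : ℝ) ∂μ
        = ∫ x in B k, (inner ℝ (K (v x) - K (w x)) (G x) : ℝ) ∂μ := by
      apply setIntegral_eq_of_subset_of_ae_diff_eq_zero
        (hvw measurableSet_Iic).nullMeasurableSet (fun x hx => hx.1)
      filter_upwards with x hx
      exact hvanish x (by by_contra hne; exact hx.2 ⟨hx.1, hne⟩)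
    -- bound on B k
    have hbound : ∀ x ∈ B k, |(inner ℝ (K (v x) - K (w x)) (G x) : ℝ)| ≤ ν₁ * k * ‖G x‖ := by
      intro x hx
      calc |(inner ℝ (K (v x) - K (w x)) (G x) : ℝ)|
          ≤ ‖K (v x) - K (w x)‖ * ‖G x‖ := abs_real_inner_le_norm _ _
        _ ≤ (ν₁ * |v x - w x|) * ‖G x‖ :=
            mul_le_mul_of_nonneg_right (hK _ _) (norm_nonneg _)
        _ ≤ (ν₁ * k) * ‖G x‖ := by
            apply mul_le_mul_of_nonneg_right _ (norm_nonneg _)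
            exact mul_le_mul_of_nonneg_left hx.1 hν₁.le
    have habs : |∫ x in B k, (inner ℝ (K (v x) - K (w x)) (G x) : ℝ) ∂μ|
        ≤ ν₁ * k * h k := by
      have h1 : |∫ x in B k, (inner ℝ (K (v x) - K (w x)) (G x) : ℝ) ∂μ|
          ≤ ∫ x in B k, |(inner ℝ (K (v x) - K (w x)) (G x) : ℝ)| ∂μ := by
        simpa using norm_integral_le_integral_norm
          (μ := μ.restrict (B k)) (fun x => (inner ℝ (K (v x) - K (w x)) (G x) : ℝ))
      refine h1.trans ?_
      rw [show ν₁ * k * h k = ∫ x in B k, ν₁ * k * ‖G x‖ ∂μ by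
        rw [hh]; rw [← integral_const_mul]]
      apply setIntegral_mono_on
      · -- integrability of the abs on B k
        apply Integrable.mono' ((hGnorm.integrableOn).const_mul (ν₁ * k))
        · exact hint_meas.restrict.norm
        · filter_upwards [ae_restrict_mem (hBm k)] with x hx
          simpa using hbound x hx
      · exact ((hGnorm.integrableOn).const_mul (ν₁ * k))
      · exact hBm k
      · exact hbound
    rw [abs_mul, hstep]
    calc |1 / k| * |∫ x in B k, (inner ℝ (K (v x) - K (w x)) (G x) : ℝ) ∂μ|
        ≤ |1 / k| * (ν₁ * k * h k) :=
          mul_le_mul_of_nonneg_left habs (abs_nonneg _)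
      _ = ν₁ * h k := by
          rw [abs_of_pos (by positivity)]
          field_simp
  -- h(1/(n+1)) → 0
  have hseq : Tendsto (fun n : ℕ => h (1 / (n + 1))) atTop (nhds 0) := by
    have hanti : Antitone fun n : ℕ => B (1 / (n + 1)) := by
      intro m n hmn
      apply hBmono
      apply one_div_le_one_div_of_le (by positivity)
      exact_mod_cast by exact_mod_cast add_le_add_left (Nat.cast_le.mpr hmn) 1
    have hiInter : (⋂ n : ℕ, B (1 / (n + 1) : ℝ)) = ∅ := by
      ext x
      simp only [Set.mem_iInter, Set.mem_empty_iff_false, iff_false]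
      intro hx
      have hpos : 0 < |v x - w x| := by
        have := (hx 0).2
        simpa [abs_pos, sub_ne_zero] using this
      obtain ⟨n, hn⟩ := exists_nat_one_div_lt hpos
      exact absurd ((hx n).1) (not_le.mpr hn)
    have := tendsto_setIntegral_of_antitone (f := fun x => ‖G x‖) (μ := μ)
      (fun n : ℕ => hBm _) hanti ⟨0, hGnorm.integrableOn⟩
    rw [hiInter] at this
    simpa using this
  -- conclude
  rw [Metric.tendsto_nhdsWithin_nhds]
  intro ε hε
  have : ∀ᶠ n : ℕ in atTop, ν₁ * h (1 / (n + 1)) < ε := by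
    have : Tendsto (fun n : ℕ => ν₁ * h (1 / (n + 1))) atTop (nhds 0) := by
      simpa using hseq.const_mul ν₁
    exact this.eventually (eventually_lt_nhds hε)
  obtain ⟨n, hn⟩ := this.exists
  refine ⟨1 / (n + 1), by positivity, fun k hk hdist => ?_⟩
  have hk0 : 0 < k := hk
  rw [Real.dist_eq, sub_zero] at hdist
  rw [Real.dist_eq, sub_zero]
  calc |(1 / k) * ∫ x in {x : Ω | |v x - w x| ≤ k}, (inner ℝ (K (v x) - K (w x)) (G x) : ℝ) ∂μ|
      ≤ ν₁ * h k := key k hk0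
    _ ≤ ν₁ * h (1 / (n + 1)) := by
        apply mul_le_mul_of_nonneg_left _ hν₁.le
        apply hhm
        rw [abs_of_pos hk0] at hdist
        exact hdist.le
    _ < ε := hn
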